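/- The two 3×3 real generator matrices M₁ = !![-1, 1/2, 1/2; 0, 0, 0; 0, 0, 0] and M₂ = !![-1, 1/2, 1/2; 0, -1, 1; 0, 1, -1] define continuous-time Markov chains with identical marginal distributions when started in the first state: for every t ≥ 0 and every j ∈ Fin 3, (Matrix.exp ℝ (t • M₁)) 0 j = (Matrix.exp ℝ (t • M₂)) 0 j. -/

import Mathlib

open NormedSpace

private noncomputable abbrev Mone : Matrix (Fin 3) (Fin 3) ℝ := !![-1, 1/2, 1/2; 0, 0, 0; 0, 0, 0]
private noncomputable abbrev Mtwo : Matrix (Fin 3) (Fin 3) ℝ := !![-1, 1/2, 1/2; 0, -1, 1; 0, 1, -1]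

private lemma row_pow_one : ∀ n : ℕ, ∀ j, (Mone ^ (n + 1)) 0 j = (-1 : ℝ) ^ n * ![(-1 : ℝ), 1/2, 1/2] j := by
  intro n
  induction n with
  | zero => intro j; fin_cases j <;> simp [Mone]
  | succ n ih =>
    intro j
    rw [pow_succ, Matrix.mul_apply, Fin.sum_univ_three, ih, ih, ih]
    fin_cases j <;> simp [Mone, Matrix.vecHead, Matrix.vecTail] <;> ring
private lemma row_pow_two : ∀ n : ℕ, ∀ j, (Mtwo ^ (n + 1)) 0 j = (-1 : ℝ) ^ n * ![(-1 : ℝ), 1/2, 1/2] j := by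
  intro n
  induction n with
  | zero => intro j; fin_cases j <;> simp [Mtwo]
  | succ n ih =>
    intro j
    rw [pow_succ, Matrix.mul_apply, Fin.sum_univ_three, ih, ih, ih]
    fin_cases j <;> simp [Mtwo, Matrix.vecHead, Matrix.vecTail] <;> ring

private lemma row_pow_eq (n : ℕ) (j : Fin 3) : (Mone ^ n) 0 j = (Mtwo ^ n) 0 j := by
  cases n with
  | zero => rfl
  | succ n => rw [row_pow_one, row_pow_two]

attribute [local instance] Matrix.linftyOpNormedRing Matrix.linftyOpNormedAlgebra

private noncomputable def entryCLM (j : Fin 3) : Matrix (Fin 3) (Fin 3) ℝ →L[ℝ] ℝ where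
  toFun A := A 0 j
  map_add' A B := rfl
  map_smul' c A := rfl
  cont := ((continuous_apply j).comp (continuous_apply (0 : Fin 3)))

/-- The two generator matrices
`M₁ = !![-1, 1/2, 1/2; 0, 0, 0; 0, 0, 0]` and `M₂ = !![-1, 1/2, 1/2; 0, -1, 1; 0, 1, -1]`
define continuous-time Markov chains with identical marginal distributions when started in the
first state: the first rows of `exp (t • M₁)` and `exp (t • M₂)` agree for all `t ≥ 0`. -/
theorem same_marginals_different_generators
    (t : ℝ) (ht : 0 ≤ t) (j : Fin 3) :
    NormedSpace.exp (t • (!![-1, 1/2, 1/2; 0, 0, 0; 0, 0, 0] : Matrix (Fin 3) (Fin 3) ℝ)) 0 j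
      = NormedSpace.exp
          (t • (!![-1, 1/2, 1/2; 0, -1, 1; 0, 1, -1] : Matrix (Fin 3) (Fin 3) ℝ)) 0 j := by
  have key : ∀ M : Matrix (Fin 3) (Fin 3) ℝ,
      entryCLM j (exp (t • M)) = ∑' n : ℕ, ((n.factorial : ℝ)⁻¹ * t ^ n) * ((M ^ n) 0 j) := by
    intro M
    rw [exp_eq_tsum (𝕂 := ℝ), (entryCLM j).map_tsum (expSeries_summable' (𝕂 := ℝ) (t • M))]
    refine tsum_congr fun n => ?_
    show ((n.factorial : ℝ)⁻¹ • (t • M) ^ n) 0 j = _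
    rw [smul_pow]
    simp [Matrix.smul_apply, mul_assoc]
  have h1 := key Mone
  have h2 := key Mtwo
  have : entryCLM j (exp (t • Mone)) = entryCLM j (exp (t • Mtwo)) := by
    rw [h1, h2]
    exact tsum_congr fun n => by rw [row_pow_eq]
  exact this
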